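/- Let f : ℝ^Θ → ℝ^Θ have components f_θ(s) = (ρ(θ) − s(θ))τ(θ) − λ·Σ_γ φ_γ·(α_γ(θ)v_γ(θ)s(θ))/(ε_γ + Σ_{θ'} α_γ(θ')s(θ')v_γ(θ')). Then for any initial condition ŝ ∈ S = {s : 0 ≤ s(θ) ≤ ρ(θ) for all θ}, the ODE ds_t/dt = f(s_t) with s_0 = ŝ has a unique solution {s_t : t ≥ 0} remaining in S. -/

import Mathlib

open Finset Real

variable {Θ Γ : Type*} [Fintype Θ] [Fintype Γ]

noncomputable def odeF (lam : ℝ) (φ ε : Γ → ℝ) (α v : Γ → Θ → ℝ) (τ ρ : Θ → ℝ)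
    (s : Θ → ℝ) (θ : Θ) : ℝ :=
  (ρ θ - s θ) * τ θ
    - lam * ∑ γ : Γ, φ γ * (α γ θ * v γ θ * s θ /
        (ε γ + ∑ θ' : Θ, α γ θ' * s θ' * v γ θ'))

set_option linter.unusedSectionVars false

section AuxLemmas

lemma div_sub_div_abs_le {a a' b b' e M : ℝ} (he : 0 < e) (hb : e ≤ b) (hb' : e ≤ b')
    (ha' : |a'| ≤ M) : |a / b - a' / b'| ≤ |a - a'| / e + M * |b - b'| / e ^ 2 := by
  have hb0 : (0:ℝ) < b := lt_of_lt_of_le he hb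
  have hb'0 : (0:ℝ) < b' := lt_of_lt_of_le he hb'
  have key : a / b - a' / b' = (a - a') / b + a' * (b' - b) / (b * b') := by
    field_simp; ring
  rw [key]
  refine (abs_add_le _ _).trans (add_le_add ?_ ?_)
  · rw [abs_div, abs_of_pos hb0]
    exact div_le_div_of_nonneg_left (abs_nonneg _) he hb
  · rw [abs_div, abs_mul, abs_of_pos (mul_pos hb0 hb'0)]
    have h2 : e ^ 2 ≤ b * b' := by nlinarith
    calc |a'| * |b' - b| / (b * b') ≤ |a'| * |b' - b| / e ^ 2 := by
          apply div_le_div_of_nonneg_left (by positivity) (by positivity) h2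
      _ ≤ M * |b - b'| / e ^ 2 := by
          apply div_le_div_of_nonneg_right ?_ (by positivity)
          rw [abs_sub_comm b' b]; exact mul_le_mul_of_nonneg_right ha' (abs_nonneg _)

lemma clamp_abs_le (c a b : ℝ) : |max 0 (min a c) - max 0 (min b c)| ≤ |a - b| := by
  calc |max 0 (min a c) - max 0 (min b c)|
      = |max (min a c) 0 - max (min b c) 0| := by rw [max_comm 0, max_comm 0]
    _ ≤ |min a c - min b c| := abs_max_sub_max_le_abs _ _ _
    _ ≤ max |a - b| |c - c| := abs_min_sub_min_le_max _ _ _ _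
    _ ≤ |a - b| := by simp

noncomputable def clampS (ρ : Θ → ℝ) (s : Θ → ℝ) : Θ → ℝ := fun θ => max 0 (min (s θ) (ρ θ))

lemma clampS_lipschitz (ρ : Θ → ℝ) : LipschitzWith 1 (clampS ρ) := by
  apply LipschitzWith.of_dist_le_mul
  intro s t
  rw [NNReal.coe_one, one_mul]
  rw [dist_pi_le_iff dist_nonneg]
  intro θ
  calc dist (clampS ρ s θ) (clampS ρ t θ) ≤ dist (s θ) (t θ) := by
        rw [Real.dist_eq, Real.dist_eq]; exact clamp_abs_le _ _ _
    _ ≤ dist s t := dist_le_pi_dist s t θ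

lemma clampS_mem (ρ : Θ → ℝ) (hρ : ∀ θ, 0 ≤ ρ θ) (s : Θ → ℝ) (θ : Θ) :
    0 ≤ clampS ρ s θ ∧ clampS ρ s θ ≤ ρ θ :=
  ⟨le_max_left _ _, max_le (hρ θ) (min_le_right _ _)⟩

lemma clampS_eq (ρ : Θ → ℝ) (s : Θ → ℝ) (h : ∀ θ, 0 ≤ s θ ∧ s θ ≤ ρ θ) : clampS ρ s = s := by
  funext θ
  rw [clampS, min_eq_left (h θ).2, max_eq_right (h θ).1]

lemma clampS_eq_rho (ρ : Θ → ℝ) (hρ : ∀ θ, 0 ≤ ρ θ) (s : Θ → ℝ) (θ : Θ) (h : ρ θ ≤ s θ) :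
    clampS ρ s θ = ρ θ := by
  rw [clampS, min_eq_right h, max_eq_right (hρ θ)]

lemma clampS_eq_zero (ρ : Θ → ℝ) (s : Θ → ℝ) (θ : Θ) (h : s θ ≤ 0) :
    clampS ρ s θ = 0 := by
  rw [clampS, max_eq_left]
  exact le_trans (min_le_left _ _) h

/-- barrier lemma: a quantity with nonpositive derivative whenever it exceeds `c`
stays below `c` in forward time. -/
lemma barrier {x x' : ℝ → ℝ} {c : ℝ} (hx : ∀ t, HasDerivAt x (x' t) t) (h0 : x 0 ≤ c)
    (hd : ∀ t, 0 ≤ t → c ≤ x t → x' t ≤ 0) : ∀ t, 0 ≤ t → x t ≤ c := by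
  intro t ht
  by_contra hct
  push_neg at hct
  have hcont : Continuous x := by
    rw [continuous_iff_continuousAt]; exact fun r => (hx r).continuousAt
  set A := Set.Icc 0 t ∩ {r | x r ≤ c} with hA
  have hne : (0:ℝ) ∈ A := ⟨⟨le_rfl, ht⟩, h0⟩
  have hclosed : IsClosed A := isClosed_Icc.inter (isClosed_le hcont continuous_const)
  have hbdd : BddAbove A := ⟨t, fun r hr => hr.1.2⟩
  set u := sSup A with hu
  have huA : u ∈ A := hclosed.csSup_mem ⟨0, hne⟩ hbdd
  have hu0 : 0 ≤ u := huA.1.1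
  have hut : u ≤ t := huA.1.2
  have hxu : x u ≤ c := huA.2
  have h3 : ∀ r, u < r → r ≤ t → c ≤ x r := by
    intro r hur hrt
    by_contra h; push_neg at h
    have hrA : r ∈ A := ⟨⟨le_trans hu0 hur.le, hrt⟩, h.le⟩
    exact absurd (le_csSup hbdd hrA) (not_le.mpr hur)
  have hanti : AntitoneOn x (Set.Icc u t) := by
    apply antitoneOn_of_deriv_nonpos (convex_Icc u t) hcont.continuousOn
    · intro r _; exact (hx r).differentiableAt.differentiableWithinAt
    · intro r hr
      rw [interior_Icc] at hr
      rw [(hx r).deriv]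
      exact hd r (le_trans hu0 hr.1.le) (h3 r hr.1 hr.2.le)
  have hfin : x t ≤ x u := hanti ⟨le_rfl, hut⟩ ⟨hut, le_rfl⟩ hut
  linarith

lemma hasDerivAt_proj {g : ℝ → Θ → ℝ} {w : Θ → ℝ} {t : ℝ} (h : HasDerivAt g w t) (θ : Θ) :
    HasDerivAt (fun r => g r θ) (w θ) t :=
  (ContinuousLinearMap.proj (R := ℝ) (φ := fun _ : Θ => ℝ) θ).hasFDerivAt.comp_hasDerivAt t h

end AuxLemmas

section Quant

variable (lam : ℝ) (φ ε : Γ → ℝ) (α v : Γ → Θ → ℝ) (τ ρ : Θ → ℝ)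

/-- Lipschitz constant for `odeF` on the box. -/
noncomputable def KK : ℝ :=
  (∑ θ : Θ, τ θ) + lam * ∑ γ : Γ, φ γ *
    ((∑ θ : Θ, α γ θ * v γ θ) / ε γ
      + (∑ θ : Θ, α γ θ * v γ θ) * (∑ θ : Θ, α γ θ * v γ θ) * (∑ θ : Θ, ρ θ) / ε γ ^ 2)

/-- Norm bound for `odeF` on the box. -/
noncomputable def CC : ℝ :=
  (∑ θ : Θ, ρ θ) * (∑ θ : Θ, τ θ)
    + lam * ∑ γ : Γ, φ γ * ((∑ θ : Θ, α γ θ * v γ θ) * (∑ θ : Θ, ρ θ) / ε γ)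

variable (hlam : 0 < lam) (hφ : ∀ γ, 0 < φ γ) (hε : ∀ γ, 0 < ε γ)
    (hα : ∀ γ θ, 0 < α γ θ) (hv : ∀ γ θ, 0 < v γ θ)
    (hτ : ∀ θ, 0 < τ θ) (hρ : ∀ θ, 0 < ρ θ)

include hlam hφ hε hα hv hτ hρ

lemma KK_nonneg : 0 ≤ KK lam φ ε α v τ ρ := by
  unfold KK
  have h1 : (0:ℝ) ≤ ∑ θ : Θ, τ θ := sum_nonneg fun θ _ => (hτ θ).le
  have h2 : (0:ℝ) ≤ ∑ γ : Γ, φ γ *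
      ((∑ θ : Θ, α γ θ * v γ θ) / ε γ
        + (∑ θ : Θ, α γ θ * v γ θ) * (∑ θ : Θ, α γ θ * v γ θ) * (∑ θ : Θ, ρ θ) / ε γ ^ 2) := by
    refine sum_nonneg fun γ _ => mul_nonneg (hφ γ).le ?_
    have hD : (0:ℝ) ≤ ∑ θ : Θ, α γ θ * v γ θ :=
      sum_nonneg fun θ _ => mul_nonneg (hα γ θ).le (hv γ θ).le
    have hP : (0:ℝ) ≤ ∑ θ : Θ, ρ θ := sum_nonneg fun θ _ => (hρ θ).le
    have := (hε γ)
    positivity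
  nlinarith

lemma CC_nonneg : 0 ≤ CC lam φ ε α v τ ρ := by
  unfold CC
  have h1 : (0:ℝ) ≤ ∑ θ : Θ, τ θ := sum_nonneg fun θ _ => (hτ θ).le
  have hP : (0:ℝ) ≤ ∑ θ : Θ, ρ θ := sum_nonneg fun θ _ => (hρ θ).le
  have h2 : (0:ℝ) ≤ ∑ γ : Γ, φ γ * ((∑ θ : Θ, α γ θ * v γ θ) * (∑ θ : Θ, ρ θ) / ε γ) := by
    refine sum_nonneg fun γ _ => mul_nonneg (hφ γ).le ?_
    have hD : (0:ℝ) ≤ ∑ θ : Θ, α γ θ * v γ θ :=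
      sum_nonneg fun θ _ => mul_nonneg (hα γ θ).le (hv γ θ).le
    have := (hε γ)
    positivity
  nlinarith

lemma odeF_lipschitzOn :
    LipschitzOnWith (Real.toNNReal (KK lam φ ε α v τ ρ)) (odeF lam φ ε α v τ ρ)
      {s : Θ → ℝ | ∀ θ, 0 ≤ s θ ∧ s θ ≤ ρ θ} := by
  have hK0 := KK_nonneg lam φ ε α v τ ρ hlam hφ hε hα hv hτ hρ
  apply LipschitzOnWith.of_dist_le_mul
  intro s hs t ht
  rw [Real.coe_toNNReal _ hK0]
  rw [dist_pi_le_iff (by positivity)]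
  intro θ
  set d := dist s t with hd
  have hd0 : 0 ≤ d := dist_nonneg
  have hcomp : ∀ θ', |s θ' - t θ'| ≤ d := fun θ' => by
    rw [← Real.dist_eq]; exact dist_le_pi_dist s t θ'
  rw [Real.dist_eq]
  set D : Γ → ℝ := fun γ => ∑ θ' : Θ, α γ θ' * v γ θ' with hDdef
  set P : ℝ := ∑ θ' : Θ, ρ θ' with hPdef
  set L : Γ → ℝ := fun γ => D γ / ε γ + D γ * D γ * P / ε γ ^ 2 with hLdef
  set Qs : Γ → ℝ := fun γ => α γ θ * v γ θ * s θ /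
      (ε γ + ∑ θ' : Θ, α γ θ' * s θ' * v γ θ') with hQsdef
  set Qt : Γ → ℝ := fun γ => α γ θ * v γ θ * t θ /
      (ε γ + ∑ θ' : Θ, α γ θ' * t θ' * v γ θ') with hQtdef
  have hDpos : ∀ γ, 0 ≤ D γ := fun γ => sum_nonneg fun θ' _ => mul_nonneg (hα γ θ').le (hv γ θ').le
  have hPpos : 0 ≤ P := sum_nonneg fun θ' _ => (hρ θ').le
  have hQ : ∀ γ : Γ, |Qs γ - Qt γ| ≤ L γ * d := by
    intro γ
    have hεγ := hε γ
    have hbs : ε γ ≤ ε γ + ∑ θ' : Θ, α γ θ' * s θ' * v γ θ' := by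
      have : (0:ℝ) ≤ ∑ θ' : Θ, α γ θ' * s θ' * v γ θ' :=
        sum_nonneg fun θ' _ => mul_nonneg (mul_nonneg (hα γ θ').le (hs θ').1) (hv γ θ').le
      linarith
    have hbt : ε γ ≤ ε γ + ∑ θ' : Θ, α γ θ' * t θ' * v γ θ' := by
      have : (0:ℝ) ≤ ∑ θ' : Θ, α γ θ' * t θ' * v γ θ' :=
        sum_nonneg fun θ' _ => mul_nonneg (mul_nonneg (hα γ θ').le (ht θ').1) (hv γ θ').le
      linarith
    have hαvD : α γ θ * v γ θ ≤ D γ :=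
      single_le_sum (f := fun θ' => α γ θ' * v γ θ')
        (fun θ' _ => mul_nonneg (hα γ θ').le (hv γ θ').le) (mem_univ θ)
    have hM : |α γ θ * v γ θ * t θ| ≤ D γ * P := by
      rw [abs_of_nonneg (mul_nonneg (mul_nonneg (hα γ θ).le (hv γ θ).le) (ht θ).1)]
      have h2 : t θ ≤ P :=
        le_trans (ht θ).2 (single_le_sum (f := fun θ' => ρ θ') (fun θ' _ => (hρ θ').le)
          (mem_univ θ))
      exact mul_le_mul hαvD h2 (ht θ).1 (hDpos γ)
    have hkey := div_sub_div_abs_le (a := α γ θ * v γ θ * s θ) (a' := α γ θ * v γ θ * t θ)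
      (e := ε γ) (M := D γ * P) hεγ hbs hbt hM
    have hnum : |α γ θ * v γ θ * s θ - α γ θ * v γ θ * t θ| ≤ D γ * d := by
      have he : α γ θ * v γ θ * s θ - α γ θ * v γ θ * t θ = α γ θ * v γ θ * (s θ - t θ) := by ring
      rw [he, abs_mul, abs_of_nonneg (mul_nonneg (hα γ θ).le (hv γ θ).le)]
      exact mul_le_mul hαvD (hcomp θ) (abs_nonneg _) (hDpos γ)
    have hden : |(ε γ + ∑ θ' : Θ, α γ θ' * s θ' * v γ θ')
        - (ε γ + ∑ θ' : Θ, α γ θ' * t θ' * v γ θ')| ≤ D γ * d := by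
      have heq : (ε γ + ∑ θ' : Θ, α γ θ' * s θ' * v γ θ')
          - (ε γ + ∑ θ' : Θ, α γ θ' * t θ' * v γ θ')
          = ∑ θ' : Θ, α γ θ' * v γ θ' * (s θ' - t θ') := by
        rw [add_sub_add_left_eq_sub, ← Finset.sum_sub_distrib]
        exact sum_congr rfl fun θ' _ => by ring
      rw [heq]
      refine (Finset.abs_sum_le_sum_abs _ _).trans ?_
      have : ∀ θ' ∈ univ, |α γ θ' * v γ θ' * (s θ' - t θ')| ≤ (α γ θ' * v γ θ') * d := by
        intro θ' _
        rw [abs_mul, abs_of_nonneg (mul_nonneg (hα γ θ').le (hv γ θ').le)]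
        exact mul_le_mul_of_nonneg_left (hcomp θ') (mul_nonneg (hα γ θ').le (hv γ θ').le)
      refine (sum_le_sum this).trans ?_
      rw [← Finset.sum_mul]
    refine hkey.trans ?_
    have hL : L γ * d = D γ * d / ε γ + D γ * P * (D γ * d) / ε γ ^ 2 := by
      simp only [hLdef]; ring
    rw [hL]
    gcongr
    exact mul_nonneg (hDpos γ) hPpos
  have hsum : ∑ γ : Γ, φ γ * Qs γ - ∑ γ : Γ, φ γ * Qt γ = ∑ γ : Γ, φ γ * (Qs γ - Qt γ) := by
    rw [← Finset.sum_sub_distrib]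
    exact sum_congr rfl fun γ _ => (mul_sub _ _ _).symm
  have hexpand : odeF lam φ ε α v τ ρ s θ - odeF lam φ ε α v τ ρ t θ
      = (t θ - s θ) * τ θ - lam * ∑ γ : Γ, φ γ * (Qs γ - Qt γ) := by
    unfold odeF
    rw [← hsum]; simp only [hQsdef, hQtdef]; ring
  rw [hexpand]
  have h1 : |(t θ - s θ) * τ θ| ≤ d * τ θ := by
    rw [abs_mul, abs_of_pos (hτ θ), abs_sub_comm]
    exact mul_le_mul_of_nonneg_right (hcomp θ) (hτ θ).le
  have h2 : |lam * ∑ γ : Γ, φ γ * (Qs γ - Qt γ)| ≤ lam * ∑ γ : Γ, φ γ * (L γ * d) := by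
    rw [abs_mul, abs_of_pos hlam]
    refine mul_le_mul_of_nonneg_left ?_ hlam.le
    refine (Finset.abs_sum_le_sum_abs _ _).trans (sum_le_sum fun γ _ => ?_)
    rw [abs_mul, abs_of_pos (hφ γ)]
    exact mul_le_mul_of_nonneg_left (hQ γ) (hφ γ).le
  have htri : |(t θ - s θ) * τ θ - lam * ∑ γ : Γ, φ γ * (Qs γ - Qt γ)|
      ≤ |(t θ - s θ) * τ θ| + |lam * ∑ γ : Γ, φ γ * (Qs γ - Qt γ)| := by
    rw [sub_eq_add_neg]
    exact (abs_add_le _ _).trans (by rw [abs_neg])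
  refine htri.trans ((add_le_add h1 h2).trans ?_)
  have hτle : τ θ ≤ ∑ θ' : Θ, τ θ' :=
    single_le_sum (f := fun θ' => τ θ') (fun θ' _ => (hτ θ').le) (mem_univ θ)
  have hsum2 : ∑ γ : Γ, φ γ * (L γ * d) = (∑ γ : Γ, φ γ * L γ) * d := by
    rw [Finset.sum_mul]; exact sum_congr rfl fun γ _ => by ring
  rw [hsum2]
  have hKeq : KK lam φ ε α v τ ρ = (∑ θ' : Θ, τ θ') + lam * ∑ γ : Γ, φ γ * L γ := by
    unfold KK
    simp only [hLdef, hDdef, hPdef]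
  rw [hKeq]
  have hφL : 0 ≤ ∑ γ : Γ, φ γ * L γ := by
    refine sum_nonneg fun γ _ => mul_nonneg (hφ γ).le ?_
    have := hε γ
    have := hDpos γ
    simp only [hLdef]
    positivity
  nlinarith [mul_le_mul_of_nonneg_right hτle hd0]

lemma odeF_norm_le (p : Θ → ℝ) (hp : ∀ θ, 0 ≤ p θ ∧ p θ ≤ ρ θ) :
    ‖odeF lam φ ε α v τ ρ p‖ ≤ CC lam φ ε α v τ ρ := by
  have hCC0 := CC_nonneg lam φ ε α v τ ρ hlam hφ hε hα hv hτ hρ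
  rw [pi_norm_le_iff_of_nonneg hCC0]
  intro θ
  rw [Real.norm_eq_abs]
  set D : Γ → ℝ := fun γ => ∑ θ' : Θ, α γ θ' * v γ θ' with hDdef
  set P : ℝ := ∑ θ' : Θ, ρ θ' with hPdef
  have hDpos : ∀ γ, 0 ≤ D γ := fun γ => sum_nonneg fun θ' _ => mul_nonneg (hα γ θ').le (hv γ θ').le
  have hPpos : 0 ≤ P := sum_nonneg fun θ' _ => (hρ θ').le
  set Q : Γ → ℝ := fun γ => α γ θ * v γ θ * p θ /
      (ε γ + ∑ θ' : Θ, α γ θ' * p θ' * v γ θ') with hQdef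
  have hQbd : ∀ γ : Γ, |Q γ| ≤ D γ * P / ε γ := by
    intro γ
    have hεγ := hε γ
    have hb : ε γ ≤ ε γ + ∑ θ' : Θ, α γ θ' * p θ' * v γ θ' := by
      have : (0:ℝ) ≤ ∑ θ' : Θ, α γ θ' * p θ' * v γ θ' :=
        sum_nonneg fun θ' _ => mul_nonneg (mul_nonneg (hα γ θ').le (hp θ').1) (hv γ θ').le
      linarith
    have hnum0 : 0 ≤ α γ θ * v γ θ * p θ :=
      mul_nonneg (mul_nonneg (hα γ θ).le (hv γ θ).le) (hp θ).1
    have hQ0 : 0 ≤ Q γ := div_nonneg hnum0 (by linarith)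
    rw [abs_of_nonneg hQ0]
    have hnumle : α γ θ * v γ θ * p θ ≤ D γ * P := by
      have h1 : α γ θ * v γ θ ≤ D γ :=
        single_le_sum (f := fun θ' => α γ θ' * v γ θ')
          (fun θ' _ => mul_nonneg (hα γ θ').le (hv γ θ').le) (mem_univ θ)
      have h2 : p θ ≤ P :=
        le_trans (hp θ).2 (single_le_sum (f := fun θ' => ρ θ') (fun θ' _ => (hρ θ').le)
          (mem_univ θ))
      exact mul_le_mul h1 h2 (hp θ).1 (hDpos γ)
    exact div_le_div₀ (mul_nonneg (hDpos γ) hPpos) hnumle hεγ hb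
  have h1 : |(ρ θ - p θ) * τ θ| ≤ P * (∑ θ' : Θ, τ θ') := by
    rw [abs_mul, abs_of_pos (hτ θ), abs_of_nonneg (by linarith [(hp θ).2])]
    have hρP : ρ θ - p θ ≤ P := by
      have : ρ θ ≤ P :=
        single_le_sum (f := fun θ' => ρ θ') (fun θ' _ => (hρ θ').le) (mem_univ θ)
      linarith [(hp θ).1]
    have hτT : τ θ ≤ ∑ θ' : Θ, τ θ' :=
      single_le_sum (f := fun θ' => τ θ') (fun θ' _ => (hτ θ').le) (mem_univ θ)
    exact mul_le_mul hρP hτT (hτ θ).le hPpos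
  have h2 : |lam * ∑ γ : Γ, φ γ * Q γ| ≤ lam * ∑ γ : Γ, φ γ * (D γ * P / ε γ) := by
    rw [abs_mul, abs_of_pos hlam]
    refine mul_le_mul_of_nonneg_left ?_ hlam.le
    refine (Finset.abs_sum_le_sum_abs _ _).trans (sum_le_sum fun γ _ => ?_)
    rw [abs_mul, abs_of_pos (hφ γ)]
    exact mul_le_mul_of_nonneg_left (hQbd γ) (hφ γ).le
  have hF : odeF lam φ ε α v τ ρ p θ = (ρ θ - p θ) * τ θ - lam * ∑ γ : Γ, φ γ * Q γ := by
    unfold odeF; simp only [hQdef]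
  rw [hF]
  have htri : |(ρ θ - p θ) * τ θ - lam * ∑ γ : Γ, φ γ * Q γ|
      ≤ |(ρ θ - p θ) * τ θ| + |lam * ∑ γ : Γ, φ γ * Q γ| := by
    rw [sub_eq_add_neg]
    exact (abs_add_le _ _).trans (by rw [abs_neg])
  refine htri.trans ((add_le_add h1 h2).trans ?_)
  unfold CC
  simp only [hDdef, hPdef]
  exact le_rfl


lemma odeF_sign_hi (p : Θ → ℝ) (hp : ∀ θ', 0 ≤ p θ') (θ : Θ) (hpθ : p θ = ρ θ) :
    odeF lam φ ε α v τ ρ p θ ≤ 0 := by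
  unfold odeF
  rw [hpθ, sub_self, zero_mul, zero_sub, neg_nonpos]
  refine mul_nonneg hlam.le (sum_nonneg fun γ _ => mul_nonneg (hφ γ).le ?_)
  have hB : 0 < ε γ + ∑ θ' : Θ, α γ θ' * p θ' * v γ θ' := by
    have : (0:ℝ) ≤ ∑ θ' : Θ, α γ θ' * p θ' * v γ θ' :=
      sum_nonneg fun θ' _ => mul_nonneg (mul_nonneg (hα γ θ').le (hp θ')) (hv γ θ').le
    linarith [hε γ]
  exact div_nonneg (mul_nonneg (mul_nonneg (hα γ θ).le (hv γ θ).le) (hpθ ▸ (hρ θ).le)) hB.le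

lemma odeF_sign_lo (p : Θ → ℝ) (θ : Θ) (hpθ : p θ = 0) :
    0 < odeF lam φ ε α v τ ρ p θ := by
  unfold odeF
  rw [hpθ]
  simp only [mul_zero, zero_div, Finset.sum_const_zero, sub_zero]
  exact mul_pos (hρ θ) (hτ θ)

end Quant

theorem ode_exists_unique (lam : ℝ) (φ ε : Γ → ℝ) (α v : Γ → Θ → ℝ) (τ ρ : Θ → ℝ)
    (hlam : 0 < lam) (hφ : ∀ γ, 0 < φ γ) (hε : ∀ γ, 0 < ε γ)
    (hα : ∀ γ θ, 0 < α γ θ) (hv : ∀ γ θ, 0 < v γ θ)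
    (hτ : ∀ θ, 0 < τ θ) (hρ : ∀ θ, 0 < ρ θ)
    (shat : Θ → ℝ) (hshat : ∀ θ, 0 ≤ shat θ ∧ shat θ ≤ ρ θ) :
    (∃ s : ℝ → Θ → ℝ, s 0 = shat ∧
        ∀ t ∈ Set.Ici (0 : ℝ), (∀ θ, 0 ≤ s t θ ∧ s t θ ≤ ρ θ) ∧
          HasDerivAt s (fun θ => odeF lam φ ε α v τ ρ (s t) θ) t) ∧
    ∀ s₁ s₂ : ℝ → Θ → ℝ,
      (s₁ 0 = shat ∧ ∀ t ∈ Set.Ici (0 : ℝ), (∀ θ, 0 ≤ s₁ t θ ∧ s₁ t θ ≤ ρ θ) ∧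
        HasDerivAt s₁ (fun θ => odeF lam φ ε α v τ ρ (s₁ t) θ) t) →
      (s₂ 0 = shat ∧ ∀ t ∈ Set.Ici (0 : ℝ), (∀ θ, 0 ≤ s₂ t θ ∧ s₂ t θ ≤ ρ θ) ∧
        HasDerivAt s₂ (fun θ => odeF lam φ ε α v τ ρ (s₂ t) θ) t) →
      ∀ t ∈ Set.Ici (0 : ℝ), s₁ t = s₂ t := by
  have hρ0 : ∀ θ, 0 ≤ ρ θ := fun θ => (hρ θ).le
  set f : (Θ → ℝ) → (Θ → ℝ) := odeF lam φ ε α v τ ρ with hfdef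
  set F : (Θ → ℝ) → (Θ → ℝ) := fun s => f (clampS ρ s) with hFdef
  set K : NNReal := Real.toNNReal (KK lam φ ε α v τ ρ) with hKdef
  have hlip : LipschitzOnWith K f {s : Θ → ℝ | ∀ θ, 0 ≤ s θ ∧ s θ ≤ ρ θ} :=
    odeF_lipschitzOn lam φ ε α v τ ρ hlam hφ hε hα hv hτ hρ
  have hFlip : LipschitzWith K F := by
    apply LipschitzWith.of_dist_le_mul
    intro s t
    calc dist (F s) (F t) ≤ K * dist (clampS ρ s) (clampS ρ t) :=
          hlip.dist_le_mul _ (fun θ => clampS_mem ρ hρ0 s θ) _ (fun θ => clampS_mem ρ hρ0 t θ)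
      _ ≤ K * dist s t := by
          refine mul_le_mul_of_nonneg_left ?_ K.coe_nonneg
          have := (clampS_lipschitz ρ).dist_le_mul s t
          rwa [NNReal.coe_one, one_mul] at this
  have hCC0 := CC_nonneg lam φ ε α v τ ρ hlam hφ hε hα hv hτ hρ
  have hFbd : ∀ s, ‖F s‖ ≤ CC lam φ ε α v τ ρ := fun s =>
    odeF_norm_le lam φ ε α v τ ρ hlam hφ hε hα hv hτ hρ _ (fun θ => clampS_mem ρ hρ0 s θ)
  -- existence of solutions on each interval [-(n+1), n+1]
  have hex : ∀ n : ℕ, ∃ g : ℝ → Θ → ℝ, g 0 = shat ∧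
      ∀ t ∈ Set.Icc (-(n+1:ℝ)) (n+1:ℝ),
        HasDerivWithinAt g (F (g t)) (Set.Icc (-(n+1:ℝ)) (n+1:ℝ)) t := by
    intro n
    have hn0 : (0:ℝ) ≤ n := Nat.cast_nonneg n
    have hpl : IsPicardLindelof (fun _ x => F x) (tmin := -(n+1:ℝ)) (tmax := (n+1:ℝ))
        ⟨0, by constructor <;> linarith⟩ shat (Real.toNNReal (CC lam φ ε α v τ ρ * (n+1))) 0
        (Real.toNNReal (CC lam φ ε α v τ ρ)) K :=
      IsPicardLindelof.of_time_independent
        (fun x _ => by rw [Real.coe_toNNReal _ hCC0]; exact hFbd x)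
        hFlip.lipschitzOnWith
        (by
          show ((CC lam φ ε α v τ ρ).toNNReal : ℝ) * max ((n+1:ℝ) - 0) (0 - -(n+1:ℝ))
            ≤ ((CC lam φ ε α v τ ρ * (n+1)).toNNReal : ℝ) - ((0 : NNReal) : ℝ)
          rw [NNReal.coe_zero, sub_zero, sub_zero, zero_sub, neg_neg, max_self, Real.coe_toNNReal _ hCC0,
            Real.coe_toNNReal _ (by positivity)])
    exact hpl.exists_eq_forall_mem_Icc_hasDerivWithinAt₀
  choose sol hsol0 hsolD using hex
  have hDAt : ∀ (n : ℕ) (t : ℝ), |t| < n+1 → HasDerivAt (sol n) (F (sol n t)) t := by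
    intro n t ht
    have habs := abs_lt.mp ht
    refine (hsolD n t ⟨habs.1.le, habs.2.le⟩).hasDerivAt ?_
    exact Icc_mem_nhds habs.1 habs.2
  -- uniqueness-based agreement between the sol n
  have hagree : ∀ m n : ℕ, m ≤ n → ∀ t : ℝ, |t| ≤ m+1 → sol m t = sol n t := by
    intro m n hmn t ht
    have habs := abs_le.mp ht
    have hmn' : (m:ℝ) + 1 ≤ (n:ℝ) + 1 := by
      have := Nat.cast_le (α := ℝ).mpr hmn; linarith
    have hDm : ∀ r : ℝ, |r| < m+1 → HasDerivAt (sol m) (F (sol m r)) r :=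
      fun r hr => hDAt m r hr
    have hDn : ∀ r : ℝ, |r| < m+1 → HasDerivAt (sol n) (F (sol n r)) r :=
      fun r hr => hDAt n r (lt_of_lt_of_le hr hmn')
    have hContm : ContinuousOn (sol m) (Set.Icc (-(m+1:ℝ)) (m+1)) := by
      intro r hr
      exact ((hsolD m r hr).continuousWithinAt)
    have hContn : ContinuousOn (sol n) (Set.Icc (-(m+1:ℝ)) (m+1)) := by
      intro r hr
      refine ((hsolD n r ⟨by linarith [hr.1], by linarith [hr.2]⟩).continuousWithinAt).mono ?_
      intro x hx
      exact ⟨by linarith [hx.1], by linarith [hx.2]⟩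
    rcases le_total 0 t with h0t | ht0
    · -- forward
      have := ODE_solution_unique (v := fun _ x => F x) (K := K) (f := sol m) (g := sol n)
        (a := 0) (b := m+1) (fun _ => hFlip)
        (hContm.mono (fun x hx => ⟨by linarith [hx.1], hx.2⟩))
        (fun r hr => ((hDm r (by rw [abs_of_nonneg hr.1]; exact hr.2)).hasDerivWithinAt))
        (hContn.mono (fun x hx => ⟨by linarith [hx.1], hx.2⟩))
        (fun r hr => ((hDn r (by rw [abs_of_nonneg hr.1]; exact hr.2)).hasDerivWithinAt))
        (by rw [hsol0 m, hsol0 n])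
      exact this ⟨h0t, habs.2⟩
    · -- backward
      have := ODE_solution_unique_of_mem_Icc_left (v := fun _ x => F x) (K := K)
        (s := fun _ => Set.univ) (f := sol m) (g := sol n) (a := -(m+1:ℝ)) (b := 0)
        (fun _ _ => hFlip.lipschitzOnWith)
        (hContm.mono (fun x hx => ⟨hx.1, by linarith [hx.2]⟩))
        (fun r hr => ((hDm r (by rw [abs_of_nonpos hr.2]; linarith [hr.1])).hasDerivWithinAt))
        (fun r _ => Set.mem_univ _)
        (hContn.mono (fun x hx => ⟨hx.1, by linarith [hx.2]⟩))
        (fun r hr => ((hDn r (by rw [abs_of_nonpos hr.2]; linarith [hr.1])).hasDerivWithinAt))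
        (fun r _ => Set.mem_univ _)
        (by rw [hsol0 m, hsol0 n])
      exact this ⟨habs.1, ht0⟩
  -- glue into a global solution
  set g : ℝ → Θ → ℝ := fun t => sol (⌈|t|⌉₊) t with hgdef
  have hg_eq : ∀ (n : ℕ) (t : ℝ), |t| ≤ n+1 → g t = sol n t := by
    intro n t ht
    have h1 : |t| ≤ (⌈|t|⌉₊ : ℝ) + 1 := le_trans (Nat.le_ceil _) (by linarith)
    rcases le_total (⌈|t|⌉₊) n with h | h
    · exact hagree _ n h t h1
    · exact (hagree n _ h t ht).symm
  have hg0 : g 0 = shat := by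
    have : g 0 = sol 0 0 := hg_eq 0 0 (by norm_num)
    rw [this, hsol0 0]
  have hgD : ∀ t : ℝ, HasDerivAt g (F (g t)) t := by
    intro t
    set n := ⌈|t|⌉₊ with hn
    have htn : |t| ≤ (n:ℝ) := Nat.le_ceil _
    have habs := abs_le.mp htn
    have hev : g =ᶠ[nhds t] sol n := by
      have hmem : Set.Ioo (-(n+1:ℝ)) (n+1) ∈ nhds t :=
        Ioo_mem_nhds (by linarith) (by linarith)
      filter_upwards [hmem] with r hr
      exact hg_eq n r (abs_le.mpr ⟨hr.1.le, hr.2.le⟩)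
    have hD := hDAt n t (lt_of_le_of_lt htn (by linarith))
    have hgt : g t = sol n t := hg_eq n t (by linarith)
    rw [hgt]
    exact hD.congr_of_eventuallyEq hev
  -- invariance in forward time
  have hinv : ∀ t : ℝ, 0 ≤ t → ∀ θ, 0 ≤ g t θ ∧ g t θ ≤ ρ θ := by
    intro t ht θ
    constructor
    · -- lower bound via barrier on -(g · θ)
      have hlow := barrier (x := fun r => -(g r θ)) (x' := fun r => -(F (g r) θ)) (c := 0)
        (fun r => (hasDerivAt_proj (hgD r) θ).neg)
        (by show -(g 0 θ) ≤ 0; rw [hg0]; linarith [(hshat θ).1])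
        (by
          intro r _ hge
          have hge' : 0 ≤ -(g r θ) := hge
          show -(F (g r) θ) ≤ 0
          have hgr0 : g r θ ≤ 0 := by linarith
          have hcl : clampS ρ (g r) θ = 0 := clampS_eq_zero ρ (g r) θ hgr0
          have hpos : 0 < F (g r) θ := by
            rw [hFdef]
            exact odeF_sign_lo lam φ ε α v τ ρ hlam hφ hε hα hv hτ hρ _ θ hcl
          linarith)
        t ht
      have hlow' : -(g t θ) ≤ 0 := hlow
      linarith
    · -- upper bound via barrier on g · θ
      exact barrier (x := fun r => g r θ) (x' := fun r => F (g r) θ) (c := ρ θ)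
        (fun r => hasDerivAt_proj (hgD r) θ)
        (by show g 0 θ ≤ ρ θ; rw [hg0]; exact (hshat θ).2)
        (by
          intro r _ hge
          have hcl : clampS ρ (g r) θ = ρ θ := clampS_eq_rho ρ hρ0 (g r) θ hge
          rw [hFdef]
          exact odeF_sign_hi lam φ ε α v τ ρ hlam hφ hε hα hv hτ hρ _
            (fun θ' => (clampS_mem ρ hρ0 (g r) θ').1) θ hcl)
        t ht
  refine ⟨⟨g, hg0, ?_⟩, ?_⟩
  · intro t ht
    have hmem := hinv t ht
    refine ⟨hmem, ?_⟩
    have hcl : clampS ρ (g t) = g t := clampS_eq ρ (g t) hmem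
    have := hgD t
    rw [hFdef] at this
    simp only at this
    rw [hcl] at this
    exact this
  · -- uniqueness
    intro s₁ s₂ h₁ h₂ t ht
    have hEq := ODE_solution_unique_of_mem_Icc_right (v := fun _ x => f x) (K := K)
      (s := fun _ => {s : Θ → ℝ | ∀ θ, 0 ≤ s θ ∧ s θ ≤ ρ θ})
      (f := s₁) (g := s₂) (a := 0) (b := t)
      (fun _ _ => hlip)
      (fun r hr => ((h₁.2 r hr.1).2.continuousAt).continuousWithinAt)
      (fun r hr => ((h₁.2 r hr.1).2.hasDerivWithinAt))
      (fun r hr => (h₁.2 r hr.1).1)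
      (fun r hr => ((h₂.2 r hr.1).2.continuousAt).continuousWithinAt)
      (fun r hr => ((h₂.2 r hr.1).2.hasDerivWithinAt))
      (fun r hr => (h₂.2 r hr.1).1)
      (by rw [h₁.1, h₂.1])
    exact hEq ⟨ht, le_rfl⟩
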